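/- Let M be a left R-module such that M^(ℵ₀) (the countable direct sum of copies of M) is injective. Then M is Σ-injective, i.e., every direct sum of copies of M is injective. -/

import Mathlib

open DirectSum

/-- A module `M` is finitely injective if every finite subset of `M` is contained in an
injective submodule of `M`. -/
def FinitelyInjective (R : Type*) [Ring R] (M : Type*) [AddCommGroup M] [Module R M] : Prop :=
  ∀ s : Finset M, ∃ N : Submodule R M, Module.Injective R N ∧ ∀ x ∈ s, x ∈ N

/-- An injective module `M` is `Σ`-injective if every direct sum of copies of `M`
is injective. -/
def SigmaInjective (R : Type u) [Ring R] (M : Type v) [AddCommGroup M] [Module R M] : Prop :=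
  ∀ ι : Type v, Module.Injective R (⨁ _ : ι, M)

/-- A module is a direct sum of injective modules if it is the internal direct sum of a
family of injective submodules. -/
def IsDirectSumOfInjectives (R : Type u) [Ring R] (M : Type v) [AddCommGroup M]
    [Module R M] : Prop :=
  ∃ (ι : Type v) (_ : DecidableEq ι) (p : ι → Submodule R M),
    (∀ i, Module.Injective R (p i)) ∧ DirectSum.IsInternal p

open DirectSum

universe u v

/-- `Q` satisfies the "cyclic Baer" criterion within `Type v`: any linear map into `Q`
from a submodule `D` of a cyclic module `span R {y}` extends (the extension being
encoded by the image `w` of the generator `y`). -/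
def CyclicBaer (R : Type u) [Ring R] (Q : Type v) [AddCommGroup Q] [Module R Q] : Prop :=
  ∀ (N : Type v) [AddCommGroup N] [Module R N] (y : N) (D : Submodule R N),
    D ≤ Submodule.span R {y} → ∀ g : D →ₗ[R] Q, ∃ w : Q,
      ∀ (r : R) (hr : r • y ∈ D), g ⟨r • y, hr⟩ = r • w

namespace CyclicBaer

open Module.Baer

variable {R : Type u} [Ring R] {Q : Type v} [AddCommGroup Q] [Module R Q]
variable {M N : Type v} [AddCommGroup M] [AddCommGroup N] [Module R M] [Module R N]
variable (i : M →ₗ[R] N) (f : M →ₗ[R] Q) [Fact (Function.Injective i)]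

/-- The intersection of the maximal-extension domain with the cyclic module generated by `y`. -/
noncomputable def subD (y : N) : Submodule R N :=
  (extensionOfMax i f).domain ⊓ Submodule.span R {y}

/-- Restriction of the maximal extension to `subD`. -/
noncomputable def gD (y : N) : (subD i f y) →ₗ[R] Q where
  toFun x := (extensionOfMax i f).toLinearPMap ⟨x.1, x.2.1⟩
  map_add' x y := by
    rw [← (extensionOfMax i f).toLinearPMap.map_add ⟨x.1, x.2.1⟩ ⟨y.1, y.2.1⟩]
    congr
  map_smul' r x := by
    rw [RingHom.id_apply, ← (extensionOfMax i f).toLinearPMap.map_smul r ⟨x.1, x.2.1⟩]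
    congr

/-- The element `w` from the cyclic Baer property. -/
noncomputable def w (h : CyclicBaer R Q) (y : N) : Q :=
  (h N y (subD i f y) inf_le_right (gD i f y)).choose

theorem w_spec (h : CyclicBaer R Q) (y : N) :
    ∀ (r : R) (hr : r • y ∈ subD i f y),
      gD i f y ⟨r • y, hr⟩ = r • w i f h y :=
  (h N y (subD i f y) inf_le_right (gD i f y)).choose_spec

/-- The analogue of `Module.Baer.ExtensionOfMaxAdjoin.extendIdealTo`. -/
noncomputable def extendIdealTo (h : CyclicBaer R Q) (y : N) : R →ₗ[R] Q :=
  LinearMap.toSpanSingleton R Q (w i f h y)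

theorem extendIdealTo_is_extension (h : CyclicBaer R Q) (y : N) :
    ∀ (x : R) (mem : x ∈ ExtensionOfMaxAdjoin.ideal i f y),
      extendIdealTo i f h y x = ExtensionOfMaxAdjoin.idealTo i f y ⟨x, mem⟩ := by
  intro x mem
  have hx : x • y ∈ subD i f y :=
    ⟨mem, Submodule.smul_mem _ x (Submodule.mem_span_singleton_self y)⟩
  have := (w_spec i f h y x hx).symm
  simpa [extendIdealTo, LinearMap.toSpanSingleton_apply, gD,
    ExtensionOfMaxAdjoin.idealTo] using this

theorem extendIdealTo_wd' (h : CyclicBaer R Q) {y : N} (r : R)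
    (eq1 : r • y = 0) : extendIdealTo i f h y r = 0 := by
  have mem : r ∈ ExtensionOfMaxAdjoin.ideal i f y := by
    change (r • y) ∈ (extensionOfMax i f).toLinearPMap.domain
    rw [eq1]; exact Submodule.zero_mem _
  rw [extendIdealTo_is_extension i f h y r mem]
  dsimp [ExtensionOfMaxAdjoin.idealTo]
  simp only [LinearMap.coe_mk, eq1, Subtype.coe_mk, ← ZeroMemClass.zero_def,
    (extensionOfMax i f).toLinearPMap.map_zero]

theorem extendIdealTo_wd (h : CyclicBaer R Q) {y : N} (r r' : R)
    (eq1 : r • y = r' • y) :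
    extendIdealTo i f h y r = extendIdealTo i f h y r' := by
  rw [← sub_eq_zero, ← map_sub]
  convert extendIdealTo_wd' i f h (r - r') _
  rw [sub_smul, sub_eq_zero, eq1]

theorem extendIdealTo_eq (h : CyclicBaer R Q) {y : N} (r : R)
    (hr : r • y ∈ (extensionOfMax i f).domain) :
    extendIdealTo i f h y r = (extensionOfMax i f).toLinearPMap ⟨r • y, hr⟩ := by
  simp only [extendIdealTo_is_extension i f h _ _ hr,
    ExtensionOfMaxAdjoin.idealTo, LinearMap.coe_mk, Subtype.coe_mk, AddHom.coe_mk]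

/-- Extension to `domain ⊔ span {y}`. -/
noncomputable def extensionToFun (h : CyclicBaer R Q) {y : N} :
    supExtensionOfMaxSingleton i f y → Q := fun x =>
  (extensionOfMax i f).toLinearPMap (ExtensionOfMaxAdjoin.fst i x) +
    extendIdealTo i f h y (ExtensionOfMaxAdjoin.snd i x)

theorem extensionToFun_wd (h : CyclicBaer R Q) {y : N}
    (x : supExtensionOfMaxSingleton i f y) (a : (extensionOfMax i f).domain)
    (r : R) (eq1 : ↑x = ↑a + r • y) :
    extensionToFun i f h x =
      (extensionOfMax i f).toLinearPMap a + extendIdealTo i f h y r := by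
  cases' a with a ha
  have eq2 :
      (ExtensionOfMaxAdjoin.fst i x - a : N) = (r - ExtensionOfMaxAdjoin.snd i x) • y := by
    change x = a + r • y at eq1
    rwa [ExtensionOfMaxAdjoin.eqn, ← sub_eq_zero, ← sub_sub_sub_eq, sub_eq_zero, ← sub_smul]
      at eq1
  have eq3 :=
    extendIdealTo_eq i f h (r - ExtensionOfMaxAdjoin.snd i x)
      (by rw [← eq2]; exact Submodule.sub_mem _ (ExtensionOfMaxAdjoin.fst i x).2 ha)
  simp only [map_sub, sub_smul, sub_eq_iff_eq_add] at eq3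
  unfold extensionToFun
  rw [eq3, ← add_assoc, ← (extensionOfMax i f).toLinearPMap.map_add, AddMemClass.mk_add_mk]
  congr
  ext
  dsimp
  rw [Subtype.coe_mk, add_sub, ← eq1]
  exact eq_sub_of_add_eq (ExtensionOfMaxAdjoin.eqn i x).symm

/-- The extension of the maximal extension to `domain ⊔ span {y}`. -/
noncomputable def extensionOfMaxAdjoin' (h : CyclicBaer R Q) (y : N) : ExtensionOf i f where
  domain := supExtensionOfMaxSingleton i f y
  le := le_trans (extensionOfMax i f).le le_sup_left
  toFun :=
    { toFun := extensionToFun i f h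
      map_add' := fun a b => by
        have eq1 :
          ↑a + ↑b =
            ↑(ExtensionOfMaxAdjoin.fst i a + ExtensionOfMaxAdjoin.fst i b) +
              (ExtensionOfMaxAdjoin.snd i a + ExtensionOfMaxAdjoin.snd i b) • y := by
          rw [ExtensionOfMaxAdjoin.eqn, ExtensionOfMaxAdjoin.eqn, add_smul, Submodule.coe_add]
          ac_rfl
        rw [extensionToFun_wd (y := y) i f h (a + b) _ _ eq1,
          LinearPMap.map_add, map_add]
        unfold extensionToFun
        abel
      map_smul' := fun r a => by
        dsimp
        have eq1 :
          r • (a : N) =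
            ↑(r • ExtensionOfMaxAdjoin.fst i a) + (r • ExtensionOfMaxAdjoin.snd i a) • y := by
          rw [ExtensionOfMaxAdjoin.eqn, smul_add, smul_eq_mul, mul_smul]
          rfl
        rw [extensionToFun_wd i f h (r • a :) _ _ eq1, LinearMap.map_smul,
          LinearPMap.map_smul, ← smul_add]
        congr }
  is_extension m := by
    dsimp
    rw [(extensionOfMax i f).is_extension,
      extensionToFun_wd i f h _ ⟨i m, _⟩ 0 _, map_zero, add_zero]
    simp

theorem extensionOfMax_le' (h : CyclicBaer R Q) {y : N} :
    extensionOfMax i f ≤ extensionOfMaxAdjoin' i f h y :=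
  ⟨le_sup_left, fun x x' EQ => by
    symm
    change extensionToFun i f h _ = _
    rw [extensionToFun_wd i f h x' x 0 (by simp [EQ]), map_zero, add_zero]⟩

theorem extensionOfMax_to_submodule_eq_top' (h : CyclicBaer R Q) :
    (extensionOfMax i f).domain = ⊤ := by
  refine Submodule.eq_top_iff'.mpr fun y => ?_
  rw [← extensionOfMax_is_max i f _ (extensionOfMax_le' i f h), extensionOfMaxAdjoin']
  exact Submodule.mem_sup.mpr
    ⟨0, Submodule.zero_mem _, y, Submodule.mem_span_singleton_self _, zero_add _⟩

protected theorem extension_property (h : CyclicBaer R Q)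
    (f : M →ₗ[R] N) (hf : Function.Injective f) (g : M →ₗ[R] Q) : ∃ h', h' ∘ₗ f = g :=
  haveI : Fact (Function.Injective f) := ⟨hf⟩
  Exists.intro
    { toFun := ((extensionOfMax f g).toLinearPMap
        ⟨·, (extensionOfMax_to_submodule_eq_top' f g h).symm ▸ ⟨⟩⟩)
      map_add' := fun x y ↦ by rw [← LinearPMap.map_add]; congr
      map_smul' := fun r x ↦ by rw [← LinearPMap.map_smul]; dsimp } <|
    LinearMap.ext fun x ↦ ((extensionOfMax f g).is_extension x).symm

/-- A module satisfying the cyclic Baer criterion in `Type v` is injective. -/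
protected theorem injective (h : CyclicBaer R Q) : Module.Injective R Q where
  out X Y _ _ _ _ i hi g := by
    obtain ⟨h', H⟩ := CyclicBaer.extension_property h i hi g
    exact ⟨h', DFunLike.congr_fun H⟩

end CyclicBaer


section Faith

variable {R : Type u} [Ring R] {M : Type v} [AddCommGroup M] [Module R M]

/-- Step A: the image of a map from a submodule of a cyclic module into a direct sum
has finite total support, provided the countable direct sum is injective. -/
theorem total_support_finite {ι : Type v}
    (h : Module.Injective R (⨁ _ : ℕ, M))
    {N : Type v} [AddCommGroup N] [Module R N] (y : N) (D : Submodule R N)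
    (hD : D ≤ Submodule.span R {y}) (g : D →ₗ[R] (⨁ _ : ι, M)) :
    ∃ S : Finset ι, ∀ (b : D) (a : ι), a ∉ S → g b a = 0 := by
  classical
  by_contra hcon
  push_neg at hcon
  -- hcon : ∀ S, ∃ b a, a ∉ S ∧ g b a ≠ 0
  choose pb pa hpa hpg using hcon
  -- build sequences
  let F : ℕ → Finset ι := fun n => Nat.rec (∅ : Finset ι) (fun n Fn => insert (pa Fn) Fn) n
  have hF : ∀ n, F (n + 1) = insert (pa (F n)) (F n) := fun n => rfl
  have hmono : ∀ m n, m ≤ n → F m ⊆ F n := by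
    intro m n hmn
    induction n with
    | zero => simpa [Nat.le_zero.mp hmn] using Finset.Subset.refl _
    | succ n ih =>
      rcases Nat.lt_or_ge m (n + 1) with hl | hg
      · exact (ih (Nat.lt_succ_iff.mp hl)).trans (by rw [hF]; exact Finset.subset_insert _ _)
      · have : m = n + 1 := le_antisymm hmn hg
        subst this; exact Finset.Subset.refl _
  set a : ℕ → ι := fun n => pa (F n) with ha_def
  set b : ℕ → D := fun n => pb (F n) with hb_def
  have key : ∀ m n, m < n → a m ≠ a n := by
    intro m n hlt heq
    have h1 : a m ∈ F n := hmono (m + 1) n hlt (by rw [hF]; exact Finset.mem_insert_self _ _)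
    rw [heq] at h1
    exact hpa (F n) h1
  have hainj : Function.Injective a := by
    intro m n hmn
    by_contra hne
    rcases lt_or_gt_of_ne hne with hl | hl
    · exact key _ _ hl hmn
    · exact key _ _ hl hmn.symm
  -- the compressed map into ⨁ _ : ℕ, M
  let G : D →ₗ[R] (⨁ _ : ℕ, M) :=
    { toFun := fun d => DFinsupp.comapDomain a hainj (g d)
      map_add' := fun d₁ d₂ => by
        refine DFinsupp.ext fun k => ?_
        simp [DFinsupp.comapDomain_apply, DirectSum.add_apply]
      map_smul' := fun r d => by
        refine DFinsupp.ext fun k => ?_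
        simp [DFinsupp.comapDomain_apply, DirectSum.smul_apply] }
  obtain ⟨H, hH⟩ := h.out (Submodule.inclusion hD) (Submodule.inclusion_injective hD) G
  set w : ⨁ _ : ℕ, M := H ⟨y, Submodule.mem_span_singleton_self y⟩ with hw
  obtain ⟨k, hk⟩ := Infinite.exists_notMem_finset (DFinsupp.support w)
  have hwk : w k = 0 := by rwa [← DFinsupp.notMem_support_iff]
  -- every element of D is r • y
  have hzero : ∀ d : D, G d k = 0 := by
    intro d
    obtain ⟨r, hr⟩ := Submodule.mem_span_singleton.mp (hD d.2)
    have hincl : Submodule.inclusion hD d =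
        r • (⟨y, Submodule.mem_span_singleton_self y⟩ : Submodule.span R {y}) := by
      apply Subtype.ext
      simpa using hr.symm
    have : G d = r • w := by rw [← hH d, hincl, map_smul, hw]
    rw [this, DirectSum.smul_apply, hwk, smul_zero]
  have := hzero (b k)
  have hGk : G (b k) k = g (b k) (a k) := DFinsupp.comapDomain_apply a hainj (g (b k)) k
  rw [hGk] at this
  exact hpg (F k) this

/-- Step B + conclusion: the direct sum over any `ι` satisfies the cyclic Baer criterion. -/
theorem cyclicBaer_directSum (h : Module.Injective R (⨁ _ : ℕ, M)) (ι : Type v) :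
    CyclicBaer R (⨁ _ : ι, M) := by
  classical
  intro N _ _ y D hD g
  obtain ⟨S, hS⟩ := total_support_finite h y D hD g
  -- compression maps
  let e : {x // x ∈ S} ≃ Fin S.card := S.equivFin
  let en : {x // x ∈ S} → ℕ := fun x => (e x : ℕ)
  have hen : Function.Injective en := fun x₁ x₂ hx =>
    e.injective (Fin.val_injective hx)
  let u : (⨁ _ : ι, M) →ₗ[R] (⨁ _ : ℕ, M) :=
    ∑ x ∈ S.attach, (lof R ℕ (fun _ => M) (en x)).comp (component R ι (fun _ => M) x.1)
  let v : (⨁ _ : ℕ, M) →ₗ[R] (⨁ _ : ι, M) :=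
    ∑ x ∈ S.attach, (lof R ι (fun _ => M) x.1).comp (component R ℕ (fun _ => M) (en x))
  have hu_apply : ∀ (z : ⨁ _ : ι, M) (x : {x // x ∈ S}), u z (en x) = z x.1 := by
    intro z x
    rw [show u z = ∑ x' ∈ S.attach, lof R ℕ (fun _ => M) (en x') (z x'.1) from by
      simp only [u, LinearMap.sum_apply, LinearMap.comp_apply]
      exact Finset.sum_congr rfl fun x' _ => rfl]
    rw [DFinsupp.finset_sum_apply]
    rw [Finset.sum_eq_single x]
    · simp [lof_eq_of, DirectSum.of_eq_same]
    · intro x' _ hne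
      exact DirectSum.of_eq_of_ne _ _ _ (fun hc => hne (hen hc.symm))
    · intro hc; exact absurd (Finset.mem_attach _ _) hc
  have hvu : ∀ z : ⨁ _ : ι, M, (∀ a ∉ S, z a = 0) → v (u z) = z := by
    intro z hz
    have hv_eq : v (u z) = ∑ x ∈ S.attach, lof R ι (fun _ => M) x.1 (z x.1) := by
      rw [show v (u z) = ∑ x ∈ S.attach, lof R ι (fun _ => M) x.1 (u z (en x)) from by
        simp only [v, LinearMap.sum_apply, LinearMap.comp_apply]
        exact Finset.sum_congr rfl fun x' _ => rfl]
      exact Finset.sum_congr rfl fun x _ => by rw [hu_apply]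
    rw [hv_eq]
    refine DFinsupp.ext fun a' => ?_
    rw [DFinsupp.finset_sum_apply]
    by_cases haS : a' ∈ S
    · rw [Finset.sum_eq_single (⟨a', haS⟩ : {x // x ∈ S})]
      · simp [lof_eq_of, DirectSum.of_eq_same]
      · intro x' _ hne
        exact DirectSum.of_eq_of_ne _ _ _ (fun hc => hne (Subtype.ext hc.symm))
      · intro hc; exact absurd (Finset.mem_attach _ _) hc
    · rw [Finset.sum_eq_zero, hz a' haS]
      intro x' _
      exact DirectSum.of_eq_of_ne _ _ _ (fun hc => haS (hc ▸ x'.2))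
  -- extend u ∘ g along D ↪ span {y}
  obtain ⟨H, hH⟩ := h.out (Submodule.inclusion hD) (Submodule.inclusion_injective hD)
    (u.comp g)
  refine ⟨v (H ⟨y, Submodule.mem_span_singleton_self y⟩), fun r hr => ?_⟩
  have hincl : Submodule.inclusion hD ⟨r • y, hr⟩ =
      r • (⟨y, Submodule.mem_span_singleton_self y⟩ : Submodule.span R {y}) := by
    apply Subtype.ext; simp
  calc g ⟨r • y, hr⟩ = v (u (g ⟨r • y, hr⟩)) := (hvu _ (fun a ha => hS _ a ha)).symm
    _ = v (H (Submodule.inclusion hD ⟨r • y, hr⟩)) := by rw [hH]; rfl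
    _ = r • v (H ⟨y, Submodule.mem_span_singleton_self y⟩) := by
        rw [hincl, map_smul, map_smul]

end Faith

theorem sigmaInjective_of_countable_directSum_injective (R : Type u) [Ring R]
    (M : Type v) [AddCommGroup M] [Module R M]
    (h : Module.Injective R (⨁ _ : ℕ, M)) : SigmaInjective R M := by
  intro ι
  exact (cyclicBaer_directSum h ι).injective
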